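/- The truncation map τ : H_{S⊎Y} X → H_S X commutes with Kleisli lifting: for every f : X → H_{S⊎Y} Z, τ ∘ f⋆_{S⊎Y} = (τ ∘ f)⋆_S ∘ τ; hence τ is a monad morphism from H_{S⊎Y} to H_S. -/

import Mathlib

noncomputable section
attribute [local instance] Classical.propDecidable

/-- Finite open trajectories over `S`: domain `[0, d)` with `d : ℝ≥0`. -/
def FTrj (S : Type) : Type := Σ d : NNReal, ({t : NNReal // t < d} → S)

/-- Closed trajectories over `S`: domain `[0, d]` with `d : ℝ≥0`. -/
def CTrj (S : Type) : Type := Σ d : NNReal, ({t : NNReal // t ≤ d} → S)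

/-- Open trajectories over `S`: domain `[0, d)` with `d : [0,∞]`. -/
def OTrj (S : Type) : Type := Σ d : ENNReal, ({t : NNReal // (t : ENNReal) < d} → S)

/-- Divergent trajectories: closed-divergent or open-divergent. -/
def DTrj (S : Type) : Type := CTrj S ⊕ OTrj S

/-- The monad `H_S X = (Σ_{I ∈ [0,ℝ≥0)} S^I × X) ⊎ (Σ_{I ∈ [0,∞]-downsets} S^I)`. -/
def HS (S X : Type) : Type := (FTrj S × X) ⊕ DTrj S

/-- The empty finite open trajectory. -/
def FTrj.eps (S : Type) : FTrj S :=
  ⟨0, fun t => absurd t.2 (by exact not_lt.mpr zero_le)⟩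

/-- Unit of `H_S`: the empty trajectory paired with the return value. -/
def HS.eta {S X : Type} (x : X) : HS S X := Sum.inl (FTrj.eps S, x)

/-- The map `ι : H_S X → X ⊎ (S ⊎ {⊥})`. -/
def HS.iota {S X : Type} : HS S X → X ⊕ (S ⊕ Unit)
  | Sum.inl (⟨d, e⟩, x) =>
      if h : 0 < d then Sum.inr (Sum.inl (e ⟨0, h⟩)) else Sum.inl x
  | Sum.inr (Sum.inl ⟨d, e⟩) => Sum.inr (Sum.inl (e ⟨0, zero_le⟩))
  | Sum.inr (Sum.inr ⟨d, e⟩) =>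
      if h : 0 < d then Sum.inr (Sum.inl (e ⟨0, by simpa using h⟩))
      else Sum.inr (Sum.inr ())

/-- Concatenation of finite open trajectories. -/
def FTrj.concat {S : Type} (p q : FTrj S) : FTrj S :=
  ⟨p.1 + q.1, fun t =>
    if h : t.1 < p.1 then p.2 ⟨t.1, h⟩
    else q.2 ⟨t.1 - p.1, (tsub_lt_iff_left (not_lt.mp h)).mpr t.2⟩⟩

/-- Action of a finite open trajectory on a closed trajectory. -/
def FTrj.actC {S : Type} (p : FTrj S) (q : CTrj S) : CTrj S :=
  ⟨p.1 + q.1, fun t =>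
    if h : t.1 < p.1 then p.2 ⟨t.1, h⟩
    else q.2 ⟨t.1 - p.1, tsub_le_iff_left.mpr t.2⟩⟩

/-- Action of a finite open trajectory on an open trajectory. -/
def FTrj.actO {S : Type} (p : FTrj S) (q : OTrj S) : OTrj S :=
  ⟨(p.1 : ENNReal) + q.1, fun t =>
    if h : t.1 < p.1 then p.2 ⟨t.1, h⟩
    else q.2 ⟨t.1 - p.1, by
      have h2 := t.2
      rw [ENNReal.coe_sub]
      exact (ENNReal.sub_lt_iff_lt_right ENNReal.coe_ne_top
        (by exact_mod_cast not_lt.mp h)).mpr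
        (h2.trans_le (add_comm ((p.1 : ENNReal)) q.1).le)⟩⟩

/-- Action of a finite open trajectory on a divergent trajectory. -/
def FTrj.actD {S : Type} (p : FTrj S) : DTrj S → DTrj S
  | Sum.inl c => Sum.inl (p.actC c)
  | Sum.inr o => Sum.inr (p.actO o)

/-- Kleisli lifting of `H_S`: trajectory concatenation, divergence absorbing. -/
def HS.bind {S X Y : Type} (f : X → HS S Y) : HS S X → HS S Y
  | Sum.inl (m, x) =>
    match f x with
    | Sum.inl (n, y) => Sum.inl (m.concat n, y)
    | Sum.inr e => Sum.inr (m.actD e)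
  | Sum.inr e => Sum.inr e

/-- Truncation of a trajectory over `S ⊎ Y` at the first time its value
leaves the left summand, given that this happens somewhere: the result is
the largest trajectory `⟨I', e'⟩` over `S` with `e t = inl (e' t)` on `I'`,
regarded as a divergent trajectory. -/
def trunc {S Y : Type} {P : NNReal → Prop}
    (hP : ∀ ⦃s t : NNReal⦄, s ≤ t → P t → P s)
    (e : {t : NNReal // P t} → S ⊕ Y)
    (hne : ∃ t : NNReal, ∃ h : P t, (e ⟨t, h⟩).isRight) : DTrj S :=
  let Bad : Set NNReal := {t : NNReal | ∃ h : P t, (e ⟨t, h⟩).isRight}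
  let d' : NNReal := sInf Bad
  have hmem : d' ≤ hne.choose := csInf_le (OrderBot.bddBelow _) hne.choose_spec
  have hPd' : P d' := hP hmem hne.choose_spec.choose
  have hleft : ∀ (t : NNReal) (ht : P t), t ≤ d' → t ≠ d' → (e ⟨t, ht⟩).isLeft := by
    intro t ht hle hned
    by_contra hcon
    have hr : (e ⟨t, ht⟩).isRight := by
      rcases hE : e ⟨t, ht⟩ with a | b
      · rw [hE] at hcon; simp at hcon
      · simp
    have hge : d' ≤ t := csInf_le (OrderBot.bddBelow _) ⟨ht, hr⟩
    exact hned (le_antisymm hle hge)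
  if hbad : (e ⟨d', hPd'⟩).isRight then
    -- divergence exactly at `d'`: the result is the open trajectory `[0, d')`
    Sum.inr ⟨(d' : ENNReal), fun t =>
      (e ⟨t.1, hP (le_of_lt (by exact_mod_cast t.2)) hPd'⟩).getLeft
        (hleft t.1 _ (le_of_lt (by exact_mod_cast t.2))
          (ne_of_lt (by exact_mod_cast t.2)))⟩
  else
    -- divergence strictly after `d'`: the result is the closed trajectory `[0, d']`
    Sum.inl ⟨d', fun t =>
      (e ⟨t.1, hP t.2 hPd'⟩).getLeft (by
        by_cases h : t.1 = d'
        · have he : (⟨t.1, hP t.2 hPd'⟩ : {t : NNReal // P t}) = ⟨d', hPd'⟩ :=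
            Subtype.ext h
          rw [he]
          rcases hE : e ⟨d', hPd'⟩ with a | b
          · simp
          · rw [hE] at hbad; simp at hbad
        · exact hleft t.1 _ t.2 h)⟩

/-- The truncation map `τ : H_{S⊎Y} X → H_S X`. -/
def HS.tau {S Y X : Type} : HS (S ⊕ Y) X → HS S X
  | Sum.inl (⟨d, e⟩, x) =>
      if hne : ∃ t : NNReal, ∃ h : t < d, (e ⟨t, h⟩).isRight then
        Sum.inr (trunc (fun _ _ hst ht => lt_of_le_of_lt hst ht) e hne)
      else
        Sum.inl (⟨d, fun t => (e t).getLeft (by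
          have h : t.1 < d → (e t).isLeft := by simpa using not_exists.mp hne t.1
          exact h t.2)⟩, x)
  | Sum.inr (Sum.inl ⟨d, e⟩) =>
      if hne : ∃ t : NNReal, ∃ h : t ≤ d, (e ⟨t, h⟩).isRight then
        Sum.inr (trunc (fun _ _ hst ht => le_trans hst ht) e hne)
      else
        Sum.inr (Sum.inl ⟨d, fun t => (e t).getLeft (by
          have h : t.1 ≤ d → (e t).isLeft := by simpa using not_exists.mp hne t.1
          exact h t.2)⟩)
  | Sum.inr (Sum.inr ⟨d, e⟩) =>
      if hne : ∃ t : NNReal, ∃ h : (t : ENNReal) < d, (e ⟨t, h⟩).isRight then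
        Sum.inr (trunc (fun _ _ hst ht => lt_of_le_of_lt (by exact_mod_cast hst) ht) e hne)
      else
        Sum.inr (Sum.inr ⟨d, fun t => (e t).getLeft (by
          have h : (t.1 : ENNReal) < d → (e t).isLeft := by
            simpa using not_exists.mp hne t.1
          exact h t.2)⟩)


lemma getLeft_congr {S Y : Type} {x y : S ⊕ Y} (h : x = y) (hx : x.isLeft) (hy : y.isLeft) :
    x.getLeft hx = y.getLeft hy := by subst h; rfl

lemma dite_split_l {α : Sort _} {c : Prop} [Decidable c] {t : c → α} {e : ¬c → α} {b : α}
    (h1 : ∀ h : c, t h = b) (h2 : ∀ h : ¬c, e h = b) : dite c t e = b := by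
  by_cases h : c
  · rw [dif_pos h]; exact h1 h
  · rw [dif_neg h]; exact h2 h

lemma dite_split_r {α : Sort _} {c : Prop} [Decidable c] {t : c → α} {e : ¬c → α} {b : α}
    (h1 : ∀ h : c, b = t h) (h2 : ∀ h : ¬c, b = e h) : b = dite c t e := by
  by_cases h : c
  · rw [dif_pos h]; exact h1 h
  · rw [dif_neg h]; exact h2 h

lemma dite_split_rf {α β : Sort _} (F : α → β) {c : Prop} [Decidable c] {t : c → α}
    {e : ¬c → α} {b : β}
    (h1 : ∀ h : c, b = F (t h)) (h2 : ∀ h : ¬c, b = F (e h)) : b = F (dite c t e) := by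
  by_cases h : c
  · rw [dif_pos h]; exact h1 h
  · rw [dif_neg h]; exact h2 h

lemma sigEqF {S : Type} {d₁ d₂ : NNReal} (h : d₁ = d₂)
    (f₁ : {t : NNReal // t < d₁} → S) (f₂ : {t : NNReal // t < d₂} → S)
    (hf : ∀ t (h₁ : t < d₁) (h₂ : t < d₂), f₁ ⟨t, h₁⟩ = f₂ ⟨t, h₂⟩) :
    (⟨d₁, f₁⟩ : Σ d : NNReal, ({t : NNReal // t < d} → S)) = ⟨d₂, f₂⟩ := by
  subst h; congr 1; funext t; exact hf t.1 t.2 t.2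

lemma sigEqC {S : Type} {d₁ d₂ : NNReal} (h : d₁ = d₂)
    (f₁ : {t : NNReal // t ≤ d₁} → S) (f₂ : {t : NNReal // t ≤ d₂} → S)
    (hf : ∀ t (h₁ : t ≤ d₁) (h₂ : t ≤ d₂), f₁ ⟨t, h₁⟩ = f₂ ⟨t, h₂⟩) :
    (⟨d₁, f₁⟩ : Σ d : NNReal, ({t : NNReal // t ≤ d} → S)) = ⟨d₂, f₂⟩ := by
  subst h; congr 1; funext t; exact hf t.1 t.2 t.2

lemma sigEqO {S : Type} {d₁ d₂ : ENNReal} (h : d₁ = d₂)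
    (f₁ : {t : NNReal // (t : ENNReal) < d₁} → S) (f₂ : {t : NNReal // (t : ENNReal) < d₂} → S)
    (hf : ∀ (t : NNReal) (h₁ : (t : ENNReal) < d₁) (h₂ : (t : ENNReal) < d₂), f₁ ⟨t, h₁⟩ = f₂ ⟨t, h₂⟩) :
    (⟨d₁, f₁⟩ : Σ d : ENNReal, ({t : NNReal // (t : ENNReal) < d} → S)) = ⟨d₂, f₂⟩ := by
  subst h; congr 1; funext t; exact hf t.1 t.2 t.2

lemma sInf_image_add {A : Set NNReal} (hA : A.Nonempty) (d : NNReal) :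
    sInf ((fun s => d + s) '' A) = d + sInf A := by
  refine (Monotone.map_csInf_of_continuousAt ?_ ?_ hA (OrderBot.bddBelow _)).symm
  · exact (continuous_add_left d).continuousAt
  · exact fun a b hab => add_le_add_right hab d

lemma trunc_eq {S Y : Type} {P Q : NNReal → Prop}
    (hP : ∀ ⦃s t : NNReal⦄, s ≤ t → P t → P s)
    (hQ : ∀ ⦃s t : NNReal⦄, s ≤ t → Q t → Q s)
    {e : {t : NNReal // P t} → S ⊕ Y} {g : {t : NNReal // Q t} → S ⊕ Y}
    (hne : ∃ t : NNReal, ∃ h : P t, (e ⟨t, h⟩).isRight)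
    (hng : ∃ t : NNReal, ∃ h : Q t, (g ⟨t, h⟩).isRight)
    (hinf : sInf {t : NNReal | ∃ h : P t, (e ⟨t, h⟩).isRight}
          = sInf {t : NNReal | ∃ h : Q t, (g ⟨t, h⟩).isRight})
    (hval : ∀ t (hp : P t) (hq : Q t),
      t ≤ sInf {t : NNReal | ∃ h : P t, (e ⟨t, h⟩).isRight} → e ⟨t, hp⟩ = g ⟨t, hq⟩) :
    trunc hP e hne = trunc hQ g hng := by
  set d₁ := sInf {t : NNReal | ∃ h : P t, (e ⟨t, h⟩).isRight} with hd₁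
  set d₂ := sInf {t : NNReal | ∃ h : Q t, (g ⟨t, h⟩).isRight} with hd₂
  have hPd : P d₁ := hP (csInf_le (OrderBot.bddBelow _) hne.choose_spec) hne.choose_spec.choose
  have hQd : Q d₂ := hQ (csInf_le (OrderBot.bddBelow _) hng.choose_spec) hng.choose_spec.choose
  have hQd1 : Q d₁ := by rw [hinf]; exact hQd
  have hev : e ⟨d₁, hPd⟩ = g ⟨d₂, hQd⟩ := by
    have := hval d₁ hPd hQd1 le_rfl
    rw [this]; exact congrArg g (Subtype.ext hinf)
  simp only [trunc]
  refine dite_split_l (fun _ => ?_) (fun _ => ?_)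
  · rename_i hb1
    refine dite_split_r (fun _ => ?_) (fun _ => ?_)
    · rename_i hb2
      refine congrArg Sum.inr (sigEqO ?_ _ _ ?_)
      · exact congrArg (fun x : NNReal => (x : ENNReal)) hinf
      · intro t h₁ h₂
        refine getLeft_congr (hval t _ _ ?_) _ _
        exact le_of_lt (by exact_mod_cast h₁)
    · rename_i hb2
      exfalso
      have hb1' : (e ⟨d₁, hPd⟩).isRight := hb1
      rw [hev] at hb1'
      exact (show ¬ (g ⟨d₂, hQd⟩).isRight = true from hb2) hb1'
  · rename_i hb1
    refine dite_split_r (fun _ => ?_) (fun _ => ?_)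
    · rename_i hb2
      exfalso
      have hb2' : (g ⟨d₂, hQd⟩).isRight := hb2
      rw [← hev] at hb2'
      exact (show ¬ (e ⟨d₁, hPd⟩).isRight = true from hb1) hb2'
    · refine congrArg Sum.inl (sigEqC hinf _ _ ?_)
      intro t h₁ h₂
      exact getLeft_congr (hval t _ _ h₁) _ _



lemma trunc_prefix {S Y : Type} {P Q : NNReal → Prop}
    (hP : ∀ ⦃s t : NNReal⦄, s ≤ t → P t → P s)
    (hQ : ∀ ⦃s t : NNReal⦄, s ≤ t → Q t → Q s)
    {e : {t : NNReal // P t} → S ⊕ Y} {E : {t : NNReal // Q t} → S ⊕ Y}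
    (hPQ : ∀ t, P t → Q t)
    (hval : ∀ t (hp : P t) (hq : Q t), E ⟨t, hq⟩ = e ⟨t, hp⟩)
    (hcap : ∀ t, Q t → ¬ P t → ∀ s, P s → s ≤ t)
    (hne : ∃ t : NNReal, ∃ h : P t, (e ⟨t, h⟩).isRight)
    (hnE : ∃ t : NNReal, ∃ h : Q t, (E ⟨t, h⟩).isRight) :
    trunc hQ E hnE = trunc hP e hne := by
  have hsub : {t : NNReal | ∃ h : P t, (e ⟨t, h⟩).isRight}
      ⊆ {t : NNReal | ∃ h : Q t, (E ⟨t, h⟩).isRight} := by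
    rintro t ⟨hp, hr⟩
    exact ⟨hPQ t hp, by rw [hval t hp (hPQ t hp)]; exact hr⟩
  have hinf : sInf {t : NNReal | ∃ h : Q t, (E ⟨t, h⟩).isRight}
      = sInf {t : NNReal | ∃ h : P t, (e ⟨t, h⟩).isRight} := by
    refine le_antisymm (csInf_le_csInf (OrderBot.bddBelow _) hne hsub) ?_
    refine le_csInf hnE ?_
    rintro b ⟨hq, hr⟩
    by_cases hp : P b
    · exact csInf_le (OrderBot.bddBelow _) ⟨hp, by rw [← hval b hp hq]; exact hr⟩
    · exact le_trans (csInf_le (OrderBot.bddBelow _) hne.choose_spec)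
        (hcap b hq hp hne.choose hne.choose_spec.choose)
  refine trunc_eq hQ hP hnE hne hinf ?_
  intro t hq hp hle
  have hpt : P t := hP (hle.trans (hinf.le.trans
    (csInf_le (OrderBot.bddBelow _) hne.choose_spec))) hne.choose_spec.choose
  exact hval t hpt hq

lemma trunc_shift {S Y : Type} {P Q : NNReal → Prop}
    (hP : ∀ ⦃s t : NNReal⦄, s ≤ t → P t → P s)
    (hQ : ∀ ⦃s t : NNReal⦄, s ≤ t → Q t → Q s)
    (m : FTrj S)
    {en : {t : NNReal // P t} → S ⊕ Y} {E : {t : NNReal // Q t} → S ⊕ Y}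
    (hp_of : ∀ (t : NNReal), Q t → ¬ t < m.1 → P (t - m.1))
    (hq_of : ∀ (t : NNReal), P t → Q (m.1 + t))
    (hlow : ∀ (t : NNReal) (h : t < m.1) (hq : Q t), E ⟨t, hq⟩ = Sum.inl (m.2 ⟨t, h⟩))
    (hhi : ∀ (t : NNReal) (hq : Q t) (h : ¬ t < m.1) (hp : P (t - m.1)),
      E ⟨t, hq⟩ = en ⟨t - m.1, hp⟩)
    (hne : ∃ t : NNReal, ∃ h : P t, (en ⟨t, h⟩).isRight)
    (hnE : ∃ t : NNReal, ∃ h : Q t, (E ⟨t, h⟩).isRight) :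
    trunc hQ E hnE = FTrj.actD m (trunc hP en hne) := by
  obtain ⟨d, me⟩ := m
  set Bp := {t : NNReal | ∃ h : P t, (en ⟨t, h⟩).isRight} with hBp
  set BE := {t : NNReal | ∃ h : Q t, (E ⟨t, h⟩).isRight} with hBE
  have hBeq : BE = (fun s => d + s) '' Bp := by
    ext t
    constructor
    · rintro ⟨hq, hr⟩
      by_cases h : t < d
      · rw [hlow t h hq] at hr; simp at hr
      · have hp := hp_of t hq h
        refine ⟨t - d, ⟨hp, by rw [← hhi t hq h hp]; exact hr⟩, ?_⟩
        exact add_tsub_cancel_of_le (not_lt.mp h)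
    · rintro ⟨s, ⟨hp, hr⟩, rfl⟩
      have hq : Q (d + s) := hq_of s hp
      have hnl : ¬ d + s < d := not_lt.mpr (le_add_right le_rfl)
      refine ⟨hq, ?_⟩
      rw [hhi (d + s) hq hnl (by rw [add_tsub_cancel_left]; exact hp)]
      have : (⟨d + s - d, by rw [add_tsub_cancel_left]; exact hp⟩ : {t : NNReal // P t})
          = ⟨s, hp⟩ := Subtype.ext (add_tsub_cancel_left d s)
      rw [this]; exact hr
  have hinf : sInf BE = d + sInf Bp := by
    rw [hBeq]; exact sInf_image_add hne d
  have hPd : P (sInf Bp) :=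
    hP (csInf_le (OrderBot.bddBelow _) hne.choose_spec) hne.choose_spec.choose
  have hQd : Q (sInf BE) := by
    rw [hinf]; exact hq_of _ hPd
  have hev : E ⟨sInf BE, hQd⟩ = en ⟨sInf Bp, hPd⟩ := by
    have h1 : ¬ sInf BE < d := by rw [hinf]; exact not_lt.mpr (le_add_right le_rfl)
    have h2 : P (sInf BE - d) := hp_of _ hQd h1
    rw [hhi _ hQd h1 h2]
    refine congrArg en (Subtype.ext ?_)
    show sInf BE - d = sInf Bp
    rw [hinf, add_tsub_cancel_left]
  simp only [trunc]
  refine dite_split_l (fun _ => ?_) (fun _ => ?_)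
  · rename_i hb1
    have hb1' : (E ⟨sInf BE, hQd⟩).isRight = true := hb1
    rw [hev] at hb1'
    refine dite_split_rf (FTrj.actD ⟨d, me⟩) (fun _ => ?_) (fun _ => ?_)
    · rename_i hb2
      simp only [FTrj.actD, FTrj.actO]
      refine congrArg Sum.inr (sigEqO ?_ _ _ ?_)
      · rw [hinf]; push_cast; rfl
      · intro t h₁ h₂
        have ht : t < sInf BE := by exact_mod_cast h₁
        have hqt : Q t := hQ ht.le hQd
        by_cases h : t < d
        · rw [dif_pos h]
          exact getLeft_congr (hlow t h hqt) _ rfl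
        · rw [dif_neg h]
          exact getLeft_congr (hhi t hqt h (hp_of t hqt h)) _ _
    · rename_i hb2
      exact absurd hb1' (show ¬ (en ⟨sInf Bp, hPd⟩).isRight = true from hb2)
  · rename_i hb1
    have hb1' : ¬ (E ⟨sInf BE, hQd⟩).isRight = true := hb1
    rw [hev] at hb1'
    refine dite_split_rf (FTrj.actD ⟨d, me⟩) (fun _ => ?_) (fun _ => ?_)
    · rename_i hb2
      exact absurd (show (en ⟨sInf Bp, hPd⟩).isRight = true from hb2) hb1'
    · simp only [FTrj.actD, FTrj.actC]
      refine congrArg Sum.inl (sigEqC hinf _ _ ?_)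
      intro t h₁ h₂
      have hqt : Q t := hQ h₁ hQd
      by_cases h : t < d
      · rw [dif_pos h]
        exact getLeft_congr (hlow t h hqt) _ rfl
      · rw [dif_neg h]
        exact getLeft_congr (hhi t hqt h (hp_of t hqt h)) _ _


/-- `τ` commutes with Kleisli lifting, `τ ∘ f⋆_{S⊎Y} = (τ ∘ f)⋆_S ∘ τ`, and
preserves the unit; hence `τ` is a monad morphism from `H_{S⊎Y}` to `H_S`. -/
theorem tau_monad_morphism {S Y X Z : Type} (f : X → HS (S ⊕ Y) Z) :
    (∀ x : X, HS.tau (HS.eta (S := S ⊕ Y) x) = HS.eta (S := S) x) ∧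
    (∀ p : HS (S ⊕ Y) X,
      HS.tau (HS.bind f p) = HS.bind (fun x => HS.tau (f x)) (HS.tau p)) := by
  constructor
  · intro x
    simp only [HS.eta, FTrj.eps, HS.tau]
    erw [dif_neg (show ¬ ∃ t : NNReal, ∃ h : t < 0, _ by rintro ⟨t, ht, -⟩; exact absurd ht (not_lt.mpr zero_le))]
    refine congrArg Sum.inl (Prod.ext ?_ rfl)
    exact sigEqF rfl _ _ (fun t h _ => absurd h (not_lt.mpr zero_le))
  · intro p
    match p with
    | Sum.inr (Sum.inl ⟨dc, ec⟩) =>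
      show HS.tau (Sum.inr (Sum.inl ⟨dc, ec⟩)) =
        HS.bind _ (HS.tau (Sum.inr (Sum.inl ⟨dc, ec⟩)))
      simp only [HS.tau]
      by_cases hc : ∃ t : NNReal, ∃ h : t ≤ dc, (ec ⟨t, h⟩).isRight
      · erw [dif_pos hc]; exact dite_split_rf (HS.bind (fun x => HS.tau (f x))) (fun _ => rfl) (fun h => absurd hc h)
      · erw [dif_neg hc]; exact dite_split_rf (HS.bind (fun x => HS.tau (f x))) (fun h => absurd h hc) (fun _ => rfl)
    | Sum.inr (Sum.inr ⟨dd, ed⟩) =>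
      show HS.tau (Sum.inr (Sum.inr ⟨dd, ed⟩)) =
        HS.bind _ (HS.tau (Sum.inr (Sum.inr ⟨dd, ed⟩)))
      simp only [HS.tau]
      by_cases hc : ∃ t : NNReal, ∃ h : (t : ENNReal) < dd, (ed ⟨t, h⟩).isRight
      · erw [dif_pos hc]; exact dite_split_rf (HS.bind (fun x => HS.tau (f x))) (fun _ => rfl) (fun h => absurd hc h)
      · erw [dif_neg hc]; exact dite_split_rf (HS.bind (fun x => HS.tau (f x))) (fun h => absurd h hc) (fun _ => rfl)
    | Sum.inl (⟨d, e⟩, x) =>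
      by_cases hA : ∃ t : NNReal, ∃ h : t < d, (e ⟨t, h⟩).isRight
      · -- bad point already in the prefix
        rcases hfx : f x with ⟨⟨dn, en⟩, y⟩ | (⟨dc, ec⟩ | ⟨dd, ed⟩)
        · simp only [HS.bind, hfx, FTrj.concat, HS.tau]
          erw [dif_pos hA]
          refine dite_split_l (fun _ => ?_) (fun _ => ?_)
          · refine congrArg Sum.inr (trunc_prefix _ _
              (fun t hp => lt_of_lt_of_le hp le_self_add)
              (fun t hp hq => dif_pos hp)
              (fun t hq hnp s hs => hs.le.trans (not_lt.mp hnp)) hA _)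
          · rename_i hnE
            exfalso
            obtain ⟨t₀, h₀, hr⟩ := hA
            exact hnE ⟨t₀, lt_of_lt_of_le h₀ le_self_add, by
              rw [dif_pos h₀]; exact hr⟩
        · simp only [HS.bind, hfx, FTrj.actD, FTrj.actC, HS.tau]
          erw [dif_pos hA]
          refine dite_split_l (fun _ => ?_) (fun _ => ?_)
          · refine congrArg Sum.inr (trunc_prefix _ _
              (fun t hp => (hp.trans_le le_self_add).le)
              (fun t hp hq => dif_pos hp)
              (fun t hq hnp s hs => hs.le.trans (not_lt.mp hnp)) hA _)
          · rename_i hnE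
            exfalso
            obtain ⟨t₀, h₀, hr⟩ := hA
            exact hnE ⟨t₀, (h₀.trans_le le_self_add).le, by
              rw [dif_pos h₀]; exact hr⟩
        · simp only [HS.bind, hfx, FTrj.actD, FTrj.actO, HS.tau]
          erw [dif_pos hA]
          refine dite_split_l (fun _ => ?_) (fun _ => ?_)
          · refine congrArg Sum.inr (trunc_prefix _ _
              (fun t hp => lt_of_lt_of_le (ENNReal.coe_lt_coe.mpr hp) le_self_add)
              (fun t hp hq => dif_pos hp)
              (fun t hq hnp s hs => hs.le.trans (not_lt.mp hnp)) hA _)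
          · rename_i hnE
            exfalso
            obtain ⟨t₀, h₀, hr⟩ := hA
            exact hnE ⟨t₀, lt_of_lt_of_le (ENNReal.coe_lt_coe.mpr h₀) le_self_add, by
              rw [dif_pos h₀]; exact hr⟩
      · -- clean prefix
        rcases hfx : f x with ⟨⟨dn, en⟩, y⟩ | (⟨dc, ec⟩ | ⟨dd, ed⟩)
        · by_cases hB : ∃ t : NNReal, ∃ h : t < dn, (en ⟨t, h⟩).isRight
          · simp only [HS.bind, hfx, FTrj.concat, HS.tau]
            erw [dif_neg hA]
            simp only [HS.bind, HS.tau, hfx]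
            erw [dif_pos hB]
            refine dite_split_l (fun _ => ?_) (fun _ => ?_)
            · refine congrArg Sum.inr (trunc_shift _ _ _ ?_ ?_ ?_ ?_ hB _)
              · exact fun t hq h => (tsub_lt_iff_left (not_lt.mp h)).mpr hq
              · exact fun t hp => add_lt_add_right hp d
              · exact fun t h hq => (dif_pos h).trans (Sum.inl_getLeft _ _).symm
              · exact fun t hq h hp => dif_neg h
            · rename_i hnE
              exfalso
              obtain ⟨t₀, h₀, hr⟩ := hB
              refine hnE ⟨d + t₀, add_lt_add_right h₀ d, ?_⟩
              rw [dif_neg (not_lt.mpr le_self_add)]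
              simp only [add_tsub_cancel_left]
              exact hr
          · simp only [HS.bind, hfx, FTrj.concat, HS.tau]
            erw [dif_neg hA]
            simp only [HS.bind, HS.tau, hfx]
            erw [dif_neg hB]
            refine dite_split_l (fun _ => ?_) (fun _ => ?_)
            · rename_i hnE
              exfalso
              obtain ⟨t₀, h₀, hr⟩ := hnE
              by_cases h : t₀ < d
              · rw [dif_pos h] at hr
                exact hA ⟨t₀, h, hr⟩
              · rw [dif_neg h] at hr
                exact hB ⟨t₀ - d, (tsub_lt_iff_left (not_lt.mp h)).mpr h₀, hr⟩
            · refine congrArg Sum.inl (Prod.ext (sigEqF rfl _ _ ?_) rfl)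
              intro t h₁ h₂
              dsimp only
              by_cases h : t < d
              · conv_rhs => rw [dif_pos h]
                exact getLeft_congr (dif_pos h) _ _
              · conv_rhs => rw [dif_neg h]
                exact getLeft_congr (dif_neg h) _ _
        · by_cases hB : ∃ t : NNReal, ∃ h : t ≤ dc, (ec ⟨t, h⟩).isRight
          · conv_lhs => simp only [HS.bind, hfx, FTrj.actD, FTrj.actC, HS.tau]
            simp only [HS.tau]
            erw [dif_neg hA]
            simp only [HS.bind, HS.tau, hfx]
            erw [dif_pos hB]
            refine dite_split_l (fun _ => ?_) (fun _ => ?_)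
            · refine congrArg Sum.inr (trunc_shift _ _ _ ?_ ?_ ?_ ?_ hB _)
              · exact fun t hq h => tsub_le_iff_left.mpr hq
              · exact fun t hp => add_le_add_right hp d
              · exact fun t h hq => (dif_pos h).trans (Sum.inl_getLeft _ _).symm
              · exact fun t hq h hp => dif_neg h
            · rename_i hnE
              exfalso
              obtain ⟨t₀, h₀, hr⟩ := hB
              refine hnE ⟨d + t₀, add_le_add_right h₀ d, ?_⟩
              rw [dif_neg (not_lt.mpr le_self_add)]
              simp only [add_tsub_cancel_left]
              exact hr
          · conv_lhs => simp only [HS.bind, hfx, FTrj.actD, FTrj.actC, HS.tau]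
            simp only [HS.tau]
            erw [dif_neg hA]
            simp only [HS.bind, HS.tau, hfx]
            erw [dif_neg hB]
            simp only [FTrj.actD, FTrj.actC]
            refine dite_split_l (fun _ => ?_) (fun _ => ?_)
            · rename_i hnE
              exfalso
              obtain ⟨t₀, h₀, hr⟩ := hnE
              by_cases h : t₀ < d
              · rw [dif_pos h] at hr
                exact hA ⟨t₀, h, hr⟩
              · rw [dif_neg h] at hr
                exact hB ⟨t₀ - d, tsub_le_iff_left.mpr h₀, hr⟩
            · refine congrArg Sum.inr (congrArg Sum.inl (sigEqC rfl _ _ ?_))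
              intro t h₁ h₂
              dsimp only
              by_cases h : t < d
              · conv_rhs => rw [dif_pos h]
                exact getLeft_congr (dif_pos h) _ _
              · conv_rhs => rw [dif_neg h]
                exact getLeft_congr (dif_neg h) _ _
        · by_cases hB : ∃ t : NNReal, ∃ h : (t : ENNReal) < dd, (ed ⟨t, h⟩).isRight
          · conv_lhs => simp only [HS.bind, hfx, FTrj.actD, FTrj.actO, HS.tau]
            simp only [HS.tau]
            erw [dif_neg hA]
            simp only [HS.bind, HS.tau, hfx]
            erw [dif_pos hB]
            refine dite_split_l (fun _ => ?_) (fun _ => ?_)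
            · refine congrArg Sum.inr (trunc_shift _ _ _ ?_ ?_ ?_ ?_ hB _)
              · intro t hq h
                rw [ENNReal.coe_sub]
                exact (ENNReal.sub_lt_iff_lt_right ENNReal.coe_ne_top
                  (by exact_mod_cast not_lt.mp h)).mpr
                  (hq.trans_le (add_comm ((d : ENNReal)) dd).le)
              · intro t hp
                push_cast
                exact ENNReal.add_lt_add_left ENNReal.coe_ne_top hp
              · exact fun t h hq => (dif_pos h).trans (Sum.inl_getLeft _ _).symm
              · exact fun t hq h hp => dif_neg h
            · rename_i hnE
              exfalso
              obtain ⟨t₀, h₀, hr⟩ := hB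
              refine hnE ⟨d + t₀, by
                push_cast
                exact ENNReal.add_lt_add_left ENNReal.coe_ne_top h₀, ?_⟩
              rw [dif_neg (not_lt.mpr le_self_add)]
              simp only [add_tsub_cancel_left]
              exact hr
          · conv_lhs => simp only [HS.bind, hfx, FTrj.actD, FTrj.actO, HS.tau]
            simp only [HS.tau]
            erw [dif_neg hA]
            simp only [HS.bind, HS.tau, hfx]
            erw [dif_neg hB]
            simp only [FTrj.actD, FTrj.actO]
            refine dite_split_l (fun _ => ?_) (fun _ => ?_)
            · rename_i hnE
              exfalso
              obtain ⟨t₀, h₀, hr⟩ := hnE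
              by_cases h : t₀ < d
              · rw [dif_pos h] at hr
                exact hA ⟨t₀, h, hr⟩
              · rw [dif_neg h] at hr
                refine hB ⟨t₀ - d, ?_, hr⟩
                rw [ENNReal.coe_sub]
                exact (ENNReal.sub_lt_iff_lt_right ENNReal.coe_ne_top
                  (by exact_mod_cast not_lt.mp h)).mpr
                  (h₀.trans_le (add_comm ((d : ENNReal)) dd).le)
            · refine congrArg Sum.inr (congrArg Sum.inr (sigEqO rfl _ _ ?_))
              intro t h₁ h₂
              dsimp only
              by_cases h : t < d
              · conv_rhs => rw [dif_pos h]
                exact getLeft_congr (dif_pos h) _ _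
              · conv_rhs => rw [dif_neg h]
                exact getLeft_congr (dif_neg h) _ _
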